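/- Let A ∈ ℂ^{n×n×n×n} be a CPS tensor. Then rank_M(A) equals the matrix rank of the square unfolding M(A), i.e., the smallest r such that A = Σ_{i=1}^r λ_i E_i∘conj(E_i) with λ_i ∈ ℝ and E_i ∈ ℂ^{n×n} symmetric equals rank(M(A)). -/

import Mathlib

open scoped BigOperators

/-- A fourth-order complex tensor is conjugate partial-symmetric (CPS). -/
def IsCPS {n : ℕ} (A : Fin n → Fin n → Fin n → Fin n → ℂ) : Prop :=
  ∀ i j k l, A i j k l = A j i k l ∧ A i j k l = A i j l k ∧
    A i j k l = starRingEnd ℂ (A k l i j)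

/-- The square unfolding `M(A)` of a fourth-order tensor: the entry in the row
indexed by `(i,j)` and the column indexed by `(k,l)` is `A_{ijkl}`. -/
def squareUnfold {n : ℕ} (A : Fin n → Fin n → Fin n → Fin n → ℂ) :
    Matrix (Fin n × Fin n) (Fin n × Fin n) ℂ :=
  fun p q => A p.1 p.2 q.1 q.2

/-- `rank_M(A)`: the smallest length of a decomposition
`A = Σ λ_t E_t ∘ conj(E_t)` with real `λ_t` and symmetric matrices `E_t`. -/
noncomputable def rankM {n : ℕ} (A : Fin n → Fin n → Fin n → Fin n → ℂ) : ℕ :=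
  sInf {r : ℕ | ∃ (lam : Fin r → ℝ) (E : Fin r → Matrix (Fin n) (Fin n) ℂ),
    (∀ t, (E t).IsSymm) ∧
    ∀ i j k l, A i j k l =
      ∑ t, (lam t : ℂ) * E t i j * starRingEnd ℂ (E t k l)}

/-- For a CPS tensor, `rank_M(A)` equals the matrix rank of the square
unfolding `M(A)`. -/
theorem rankM_eq_rank_squareUnfold {n : ℕ}
    (A : Fin n → Fin n → Fin n → Fin n → ℂ) (hA : IsCPS A) :
    rankM A = (squareUnfold A).rank := by
  classical
  set H := squareUnfold A with hHdef
  -- H is Hermitian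
  have hHerm : H.IsHermitian := by
    ext p q
    simp only [Matrix.conjTranspose_apply, hHdef, squareUnfold, Matrix.star_apply]
    exact ((hA p.1 p.2 q.1 q.2).2.2).symm
  -- rows of H are symmetric in the first index pair
  have hrow : ∀ (i j : Fin n) (q : Fin n × Fin n), H (i, j) q = H (j, i) q := by
    intro i j q
    simpa [hHdef, squareUnfold] using (hA i j q.1 q.2).1
  -- entrywise spectral theorem
  have hspec : ∀ p q, H p q =
      ∑ x, (hHerm.eigenvalues x : ℂ) * hHerm.eigenvectorBasis x p *
        starRingEnd ℂ (hHerm.eigenvectorBasis x q) := by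
    intro p q
    conv_lhs => rw [hHerm.spectral_theorem]
    rw [Unitary.conjStarAlgAut_apply, Matrix.mul_apply]
    refine Finset.sum_congr rfl fun x _ => ?_
    rw [Matrix.mul_diagonal, Matrix.star_apply]
    simp only [Matrix.IsHermitian.eigenvectorUnitary_apply, Function.comp_apply,
      RCLike.star_def]
    show hHerm.eigenvectorBasis x p * (hHerm.eigenvalues x : ℂ) *
      starRingEnd ℂ (hHerm.eigenvectorBasis x q) = _
    ring
  -- the rank is achieved by a decomposition
  have key : H.rank ∈ {r : ℕ | ∃ (lam : Fin r → ℝ)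
      (E : Fin r → Matrix (Fin n) (Fin n) ℂ), (∀ t, (E t).IsSymm) ∧
      ∀ i j k l, A i j k l =
        ∑ t, (lam t : ℂ) * E t i j * starRingEnd ℂ (E t k l)} := by
    have hr : Fintype.card {x : Fin n × Fin n // hHerm.eigenvalues x ≠ 0} = H.rank :=
      hHerm.rank_eq_card_non_zero_eigs.symm
    let e : Fin H.rank ≃ {x : Fin n × Fin n // hHerm.eigenvalues x ≠ 0} :=
      (Fintype.equivFinOfCardEq hr).symm
    refine ⟨fun t => hHerm.eigenvalues (e t).1,
      fun t => Matrix.of fun i j => hHerm.eigenvectorBasis (e t).1 (i, j), ?_, ?_⟩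
    · -- symmetry of the eigen-matrices
      intro t
      have hx : hHerm.eigenvalues (e t).1 ≠ 0 := (e t).2
      have hev := hHerm.mulVec_eigenvectorBasis (e t).1
      have hμ : (hHerm.eigenvalues (e t).1 : ℂ) ≠ 0 := Complex.ofReal_ne_zero.mpr hx
      rw [Matrix.IsSymm]
      ext i j
      simp only [Matrix.transpose_apply, Matrix.of_apply]
      have h1 : (H.mulVec ⇑(hHerm.eigenvectorBasis (e t).1)) (j, i)
          = (H.mulVec ⇑(hHerm.eigenvectorBasis (e t).1)) (i, j) := by
        simp only [Matrix.mulVec, dotProduct]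
        exact Finset.sum_congr rfl fun q _ => by exact congrArg (fun z => z * _) (hrow j i q)
      rw [hev] at h1
      simp only [Pi.smul_apply, Complex.real_smul] at h1
      exact mul_left_cancel₀ hμ h1
    · intro i j k l
      have h0 : A i j k l = H (i, j) (k, l) := rfl
      set f : Fin n × Fin n → ℂ := fun x =>
        (hHerm.eigenvalues x : ℂ) * hHerm.eigenvectorBasis x (i, j) *
          starRingEnd ℂ (hHerm.eigenvectorBasis x (k, l)) with hf
      have h1 : ∑ x ∈ Finset.univ.filter (fun x => hHerm.eigenvalues x ≠ 0), f x
          = ∑ x, f x := by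
        refine Finset.sum_filter_of_ne fun x _ hfx hx => hfx ?_
        simp [hf, hx]
      have h2 : ∑ x ∈ Finset.univ.filter (fun x => hHerm.eigenvalues x ≠ 0), f x
          = ∑ s : {x : Fin n × Fin n // hHerm.eigenvalues x ≠ 0}, f s.1 :=
        Finset.sum_subtype _ (by simp) f
      have h3 : ∑ t : Fin H.rank, f (e t).1
          = ∑ s : {x : Fin n × Fin n // hHerm.eigenvalues x ≠ 0}, f s.1 :=
        Fintype.sum_equiv e _ _ (fun t => rfl)
      calc A i j k l = ∑ x, f x := by rw [h0, hspec]
        _ = ∑ t : Fin H.rank, f (e t).1 := by rw [← h1, h2, ← h3]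
        _ = _ := by simp [hf]
  -- any decomposition with r terms bounds the rank
  have lower : ∀ r ∈ {r : ℕ | ∃ (lam : Fin r → ℝ)
      (E : Fin r → Matrix (Fin n) (Fin n) ℂ), (∀ t, (E t).IsSymm) ∧
      ∀ i j k l, A i j k l =
        ∑ t, (lam t : ℂ) * E t i j * starRingEnd ℂ (E t k l)}, H.rank ≤ r := by
    rintro r ⟨lam, E, _, hdec⟩
    set B : Matrix (Fin n × Fin n) (Fin r) ℂ :=
      Matrix.of fun p t => (lam t : ℂ) * E t p.1 p.2 with hB
    set C : Matrix (Fin r) (Fin n × Fin n) ℂ :=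
      Matrix.of fun t q => starRingEnd ℂ (E t q.1 q.2) with hC
    have hfac : H = B * C := by
      ext p q
      rw [Matrix.mul_apply]
      simpa [hB, hC, hHdef, squareUnfold] using hdec p.1 p.2 q.1 q.2
    calc H.rank = (B * C).rank := by rw [hfac]
      _ ≤ B.rank := Matrix.rank_mul_le_left B C
      _ ≤ Fintype.card (Fin r) := Matrix.rank_le_card_width B
      _ = r := Fintype.card_fin r
  refine le_antisymm (Nat.sInf_le key) (le_csInf ⟨_, key⟩ lower)
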